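/- Tight closure of ideals is glueable: let p be a prime, let R be a Noetherian commutative ring of characteristic p, let (f_α)_{α∈A} be elements of R, and let g be an element of the radical of the ideal generated by the f_α. Let I be an ideal of R and z ∈ R such that for every α ∈ A, the image z/1 of z in R_{f_α} lies in the tight closure (I·R_{f_α})^*. Then the image z/1 of z in R_g lies in the tight closure (I·R_g)^*. -/

import Mathlib

/-- `offMinimal S` is `S°`, the set of elements of `S` lying outside every minimal prime. -/
def offMinimal (S : Type*) [CommRing S] : Set S :=
  {c : S | ∀ P ∈ minimalPrimes S, c ∉ P}

/-- The bracket power `J^[q]`, generated by `q`-th powers of elements of `J`. -/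
def bracketPow {S : Type*} [CommRing S] (J : Ideal S) (q : ℕ) : Ideal S :=
  Ideal.span ((fun a => a ^ q) '' (J : Set S))

/-- The tight closure `J^*` of an ideal `J` in a ring of characteristic `p`. -/
def tightClosure (p : ℕ) {S : Type*} [CommRing S] (J : Ideal S) : Set S :=
  {z : S | ∃ c ∈ offMinimal S, ∃ e₀ : ℕ, ∀ e : ℕ, e₀ ≤ e →
    c * z ^ p ^ e ∈ bracketPow J (p ^ e)}

section Helpers

variable {p : ℕ}

private lemma fresh {T : Type*} [CommRing T] (hp : p.Prime) (hT : (p : T) = 0)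
    (x y : T) (n : ℕ) : (x + y) ^ p ^ n = x ^ p ^ n + y ^ p ^ n := by
  rw [(Commute.all x y).add_pow_prime_pow_eq hp n, hT, zero_mul, zero_mul, zero_mul, add_zero]

private lemma pow_mem_span_pow {T : Type*} [CommRing T] (hp : p.Prime)
    (hT : (p : T) = 0) (X : Set T) {x : T} (hx : x ∈ Ideal.span X) (e : ℕ) :
    x ^ p ^ e ∈ Ideal.span ((fun a => a ^ p ^ e) '' X) := by
  induction hx using Submodule.span_induction with
  | mem a ha => exact Ideal.subset_span ⟨a, ha, rfl⟩
  | zero => rw [zero_pow (pow_pos hp.pos e).ne']; exact Ideal.zero_mem _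
  | add a b _ _ hpa hpb => rw [fresh hp hT]; exact Ideal.add_mem _ hpa hpb
  | smul r a _ hpa => rw [smul_eq_mul, mul_pow]; exact Ideal.mul_mem_left _ _ hpa

private lemma bracketPow_span {T : Type*} [CommRing T] (hp : p.Prime) (hT : (p : T) = 0)
    (X : Set T) (e : ℕ) :
    bracketPow (Ideal.span X) (p ^ e) = Ideal.span ((fun a => a ^ p ^ e) '' X) := by
  refine le_antisymm ?_ (Ideal.span_mono (Set.image_mono Ideal.subset_span))
  rw [bracketPow, Ideal.span_le]
  rintro _ ⟨a, ha, rfl⟩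
  exact pow_mem_span_pow hp hT X ha e

private lemma mem_bracketPow_pow {T : Type*} [CommRing T] (hp : p.Prime)
    (hT : (p : T) = 0) {I : Ideal T} {u : T} {e : ℕ} (hu : u ∈ bracketPow I (p ^ e)) (s : ℕ) :
    u ^ p ^ s ∈ bracketPow I (p ^ (e + s)) := by
  induction hu using Submodule.span_induction with
  | mem a ha =>
    obtain ⟨b, hb, rfl⟩ := ha
    refine Ideal.subset_span ⟨b, hb, ?_⟩
    rw [← pow_mul, ← pow_add]
  | zero => rw [zero_pow (pow_pos hp.pos s).ne']; exact Ideal.zero_mem _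
  | add a b _ _ hpa hpb => rw [fresh hp hT]; exact Ideal.add_mem _ hpa hpb
  | smul r a _ hpa => rw [smul_eq_mul, mul_pow]; exact Ideal.mul_mem_left _ _ hpa

private lemma map_bracketPow_le {T U : Type*} [CommRing T] [CommRing U] (φ : T →+* U)
    (J : Ideal T) (q : ℕ) : (bracketPow J q).map φ ≤ bracketPow (J.map φ) q := by
  rw [bracketPow, Ideal.map_span, Ideal.span_le]
  rintro _ ⟨_, ⟨a, ha, rfl⟩, rfl⟩
  rw [map_pow]
  exact Ideal.subset_span ⟨φ a, Ideal.mem_map_of_mem φ ha, rfl⟩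

private lemma bracketPow_map_eq {T U : Type*} [CommRing T] [CommRing U] (hp : p.Prime)
    (hU : (p : U) = 0) (φ : T →+* U) (J : Ideal T) (e : ℕ) :
    bracketPow (J.map φ) (p ^ e) = (bracketPow J (p ^ e)).map φ := by
  refine le_antisymm ?_ (map_bracketPow_le φ J _)
  have h1 : J.map φ = Ideal.span (φ '' J) := by
    conv_lhs => rw [← Ideal.span_eq J]
    rw [Ideal.map_span]
  rw [h1, bracketPow_span hp hU, Ideal.span_le]
  rintro _ ⟨_, ⟨a, ha, rfl⟩, rfl⟩
  show φ a ^ p ^ e ∈ _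
  rw [← map_pow]
  exact Ideal.mem_map_of_mem φ (Ideal.subset_span ⟨a, ha, rfl⟩)

end Helpers
private lemma disjoint_powers {R : Type*} [CommRing R] {f : R} {P : Ideal R} (hP : P.IsPrime)
    (hf : f ∉ P) : Disjoint (Submonoid.powers f : Set R) (P : Set R) := by
  rw [Set.disjoint_left]
  rintro x ⟨k, rfl⟩ hxP
  exact hf (hP.mem_of_pow_mem k hxP)

private lemma comap_minimalPrimes {R S : Type*} [CommRing R] [CommRing S] (M : Submonoid R)
    [Algebra R S] [IsLocalization M S] {P' : Ideal S} (h : P' ∈ minimalPrimes S) :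
    P'.comap (algebraMap R S) ∈ minimalPrimes R := by
  have hP' : P'.IsPrime := h.1.1
  haveI := hP'
  obtain ⟨Q, hQ, hQle⟩ := Ideal.exists_minimalPrimes_le (bot_le : ⊥ ≤ P'.comap (algebraMap R S))
  have hQp : Q.IsPrime := hQ.1.1
  have hdisj : Disjoint (M : Set R) (Q : Set R) := by
    rw [Set.disjoint_left]
    intro m hm hmQ
    have hmem : algebraMap R S m ∈ P' := hQle hmQ
    exact hP'.ne_top (Ideal.eq_top_of_isUnit_mem _ hmem (IsLocalization.map_units S ⟨m, hm⟩))
  have hmap : (Q.map (algebraMap R S)).IsPrime :=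
    IsLocalization.isPrime_of_isPrime_disjoint M S Q hQp hdisj
  have hle : Q.map (algebraMap R S) ≤ P' := Ideal.map_le_iff_le_comap.mpr hQle
  have h2 : P' ≤ Q.map (algebraMap R S) := h.2 ⟨hmap, bot_le⟩ hle
  have h3 : P'.comap (algebraMap R S) ≤ Q := by
    have h4 := Ideal.comap_mono (f := algebraMap R S) h2
    exact h4.trans (IsLocalization.comap_map_of_isPrime_disjoint M S hQp hdisj).le
  have heq : P'.comap (algebraMap R S) = Q := le_antisymm h3 hQle
  rw [heq]; exact hQ

private lemma exists_minimalPrime_map {R S : Type*} [CommRing R] [CommRing S] (M : Submonoid R)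
    [Algebra R S] [IsLocalization M S] {P : Ideal R} (hP : P ∈ minimalPrimes R)
    (hdisj : Disjoint (M : Set R) (P : Set R)) :
    ∃ P' ∈ minimalPrimes S, P = P'.comap (algebraMap R S) := by
  have hPp : P.IsPrime := hP.1.1
  have hmp : (P.map (algebraMap R S)).IsPrime :=
    IsLocalization.isPrime_of_isPrime_disjoint M S P hPp hdisj
  haveI := hmp
  obtain ⟨Q', hQ', hle⟩ := Ideal.exists_minimalPrimes_le (bot_le : ⊥ ≤ P.map (algebraMap R S))
  refine ⟨Q', hQ', ?_⟩
  have h1 : Q'.comap (algebraMap R S) ≤ P := by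
    have h4 := Ideal.comap_mono (f := algebraMap R S) hle
    exact h4.trans (IsLocalization.comap_map_of_isPrime_disjoint M S hPp hdisj).le
  have hcp : (Q'.comap (algebraMap R S)).IsPrime := by
    haveI := hQ'.1.1; exact Ideal.IsPrime.comap _
  have h2 : P ≤ Q'.comap (algebraMap R S) := hP.2 ⟨hcp, bot_le⟩ h1
  exact le_antisymm h2 h1

private lemma pull {p : ℕ} (hp : p.Prime) {R : Type*} [CommRing R] (hpR : (p : R) = 0)
    (f z : R) (I : Ideal R)
    (h : algebraMap R (Localization.Away f) z ∈
      tightClosure p (I.map (algebraMap R (Localization.Away f)))) :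
    ∃ d : R, (∀ P ∈ minimalPrimes R, f ∉ P → d ∉ P) ∧
      ∃ e₀ : ℕ, ∀ e, e₀ ≤ e → ∃ t, f ^ t * (d * z ^ p ^ e) ∈ bracketPow I (p ^ e) := by
  set Rf := Localization.Away f with hRf
  set φ := algebraMap R Rf with hφ
  have hpRf : (p : Rf) = 0 := by rw [← map_natCast φ p, hpR, map_zero]
  obtain ⟨c, hc, e₀, hce⟩ := h
  obtain ⟨⟨d, m⟩, hdm⟩ := IsLocalization.surj (Submonoid.powers f) c
  refine ⟨d, ?_, e₀, ?_⟩
  · intro P hP hfP hdP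
    obtain ⟨P', hP', hPeq⟩ := exists_minimalPrime_map (Submonoid.powers f) (S := Rf) hP
      (disjoint_powers hP.1.1 hfP)
    have hφd : φ d ∈ P' := by rw [hPeq] at hdP; exact hdP
    rw [← hdm] at hφd
    have hP'p : P'.IsPrime := hP'.1.1
    rcases hP'p.mem_or_mem hφd with h1 | h1
    · exact hc P' hP' h1
    · exact hP'p.ne_top (Ideal.eq_top_of_isUnit_mem _ h1 (IsLocalization.map_units Rf m))
  · intro e he
    have h1 := hce e he
    have h2 : φ (d * z ^ p ^ e) ∈ bracketPow (I.map φ) (p ^ e) := by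
      have h3 := Ideal.mul_mem_left _ (φ m) h1
      have h4 : φ (d * z ^ p ^ e) = φ ↑m * (c * φ z ^ p ^ e) := by
        rw [map_mul, map_pow, ← hdm]; ring
      rw [h4]; exact h3
    rw [bracketPow_map_eq hp hpRf φ I e] at h2
    rw [IsLocalization.mem_map_algebraMap_iff (Submonoid.powers f) Rf] at h2
    obtain ⟨⟨x, m'⟩, hxm⟩ := h2
    rw [← map_mul] at hxm
    obtain ⟨m'', hm''⟩ := (IsLocalization.eq_iff_exists (Submonoid.powers f) Rf).mp hxm
    obtain ⟨t1, ht1⟩ := m'.2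
    obtain ⟨t2, ht2⟩ := m''.2
    refine ⟨t1 + t2, ?_⟩
    have heq : f ^ (t1 + t2) * (d * z ^ p ^ e) = ↑m'' * (d * z ^ p ^ e * ↑m') := by
      rw [← ht1, ← ht2]; ring
    rw [heq, hm'']
    exact Ideal.mul_mem_left _ _ x.2

private lemma core {p : ℕ} (hp : p.Prime) {S : Type*} [CommRing S] [IsNoetherianRing S]
    (hpS : (p : S) = 0) {n : ℕ} (F : Fin n → S)
    (hF : (1 : S) ∈ (Ideal.span (Set.range F)).radical) (I : Ideal S) (z : S)
    (hd : ∀ i, ∃ d : S, (∀ P ∈ minimalPrimes S, F i ∉ P → d ∉ P) ∧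
      ∃ e₀ : ℕ, ∀ e, e₀ ≤ e → ∃ t, F i ^ t * (d * z ^ p ^ e) ∈ bracketPow I (p ^ e)) :
    z ∈ tightClosure p I := by
  classical
  choose d hd1 e₀f hd2 using hd
  set E0 : ℕ := Finset.univ.sup e₀f with hE0
  set CP : Ideal S → S := fun P => ∏ j ∈ Finset.univ.filter (fun j => F j ∉ P), d j with hCP
  -- Step 1 : for every minimal prime P and e ≥ E0, CP P * z^{p^e} ∈ B + P
  have hqP : ∀ e, E0 ≤ e → ∀ P ∈ minimalPrimes S,
      CP P * z ^ p ^ e ∈ bracketPow I (p ^ e) ⊔ P := by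
    intro e he P hPmin
    have hPp : P.IsPrime := hPmin.1.1
    choose t ht using fun i : Fin n =>
      hd2 i e (le_trans (Finset.le_sup (Finset.mem_univ i)) he)
    set T : ℕ := Finset.univ.sup t + 1 with hTdef
    have hT : ∀ i, F i ^ T * (d i * z ^ p ^ e) ∈ bracketPow I (p ^ e) := by
      intro i
      have hle : t i ≤ T := le_trans (Finset.le_sup (Finset.mem_univ i)) (Nat.le_succ _)
      have h1 : F i ^ T = F i ^ (T - t i) * F i ^ t i := by rw [← pow_add]; congr 1; omega
      rw [h1, mul_assoc]
      exact Ideal.mul_mem_left _ _ (ht i)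
    have h1T : (1 : S) ∈ Ideal.span (Set.range fun i => F i ^ T) := by
      have h1 : (1 : S) ∈ Ideal.span (Set.range F) := by
        obtain ⟨k, hk⟩ := hF; rwa [one_pow] at hk
      have hsub : Ideal.span (Set.range F) ≤
          (Ideal.span (Set.range fun i => F i ^ T)).radical := by
        rw [Ideal.span_le]
        rintro _ ⟨i, rfl⟩
        exact ⟨T, Ideal.subset_span ⟨i, rfl⟩⟩
      obtain ⟨k, hk⟩ := hsub h1
      rwa [one_pow] at hk
    obtain ⟨b, hb⟩ := (Submodule.mem_span_range_iff_exists_fun S).mp h1T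
    have key : CP P * z ^ p ^ e = ∑ i, b i * (F i ^ T * (CP P * z ^ p ^ e)) := by
      calc CP P * z ^ p ^ e = (∑ i, b i • F i ^ T) * (CP P * z ^ p ^ e) := by rw [hb, one_mul]
        _ = ∑ i, b i * (F i ^ T * (CP P * z ^ p ^ e)) := by
            rw [Finset.sum_mul]
            exact Finset.sum_congr rfl fun i _ => by rw [smul_eq_mul, mul_assoc]
    rw [key]
    refine Ideal.sum_mem _ fun i _ => ?_
    by_cases hiP : F i ∈ P
    · refine Submodule.mem_sup_right ?_
      exact Ideal.mul_mem_left _ _ (Ideal.mul_mem_right _ _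
        (Ideal.pow_mem_of_mem P hiP T (by omega)))
    · have hifilter : i ∈ Finset.univ.filter (fun j => F j ∉ P) := by
        simp [hiP]
      have hCPi : CP P = d i * ∏ j ∈ (Finset.univ.filter (fun j => F j ∉ P)).erase i, d j :=
        (Finset.mul_prod_erase _ _ hifilter).symm
      refine Submodule.mem_sup_left ?_
      have heq : b i * (F i ^ T * (CP P * z ^ p ^ e)) =
          (b i * ∏ j ∈ (Finset.univ.filter (fun j => F j ∉ P)).erase i, d j) *
            (F i ^ T * (d i * z ^ p ^ e)) := by
        rw [hCPi]; ring
      rw [heq]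
      exact Ideal.mul_mem_left _ _ (hT i)
  -- Step 2 : prime avoidance elements
  have hfin : (minimalPrimes S).Finite := minimalPrimes.finite_of_isNoetherianRing S
  set PS : Finset (Ideal S) := hfin.toFinset with hPS
  have hEP : ∀ P ∈ PS, ∃ x : S, (∀ Q ∈ PS, Q ≠ P → x ∈ Q) ∧ x ∉ P := by
    intro P hPmem
    have hPmin : P ∈ minimalPrimes S := hfin.mem_toFinset.mp hPmem
    have hPp : P.IsPrime := hPmin.1.1
    have hnle : ¬ (PS.erase P).inf id ≤ P := by
      intro hle
      obtain ⟨Q, hQmem, hQle⟩ := (Ideal.IsPrime.inf_le' hPp).mp hle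
      have hQmin : Q ∈ minimalPrimes S := hfin.mem_toFinset.mp (Finset.mem_of_mem_erase hQmem)
      have h2 : P ≤ Q := hPmin.2 ⟨hQmin.1.1, bot_le⟩ hQle
      exact (Finset.ne_of_mem_erase hQmem) (le_antisymm hQle h2)
    obtain ⟨x, hx1, hx2⟩ := SetLike.not_le_iff_exists.mp hnle
    refine ⟨x, fun Q hQ hne => ?_, hx2⟩
    have h5 : (PS.erase P).inf id ≤ Q := Finset.inf_le (Finset.mem_erase.mpr ⟨hne, hQ⟩)
    exact h5 hx1
  choose! E hE1 hE2 using hEP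
  set c : S := ∑ P ∈ PS, E P * CP P with hc
  -- c avoids every minimal prime
  have hc1 : ∀ P0 ∈ minimalPrimes S, c ∉ P0 := by
    intro P0 hP0 hcmem
    have hP0mem : P0 ∈ PS := hfin.mem_toFinset.mpr hP0
    have hP0p : P0.IsPrime := hP0.1.1
    have hsum : ∑ P ∈ PS.erase P0, E P * CP P ∈ P0 :=
      Ideal.sum_mem _ fun P hP =>
        Ideal.mul_mem_right _ _
          (hE1 P (Finset.mem_of_mem_erase hP) P0 hP0mem (Finset.ne_of_mem_erase hP).symm)
    have hmem : E P0 * CP P0 ∈ P0 := by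
      have heq : E P0 * CP P0 = c - ∑ P ∈ PS.erase P0, E P * CP P := by
        rw [hc, ← Finset.add_sum_erase PS _ hP0mem]; ring
      rw [heq]; exact Ideal.sub_mem _ hcmem hsum
    rcases hP0p.mem_or_mem hmem with h1 | h1
    · exact hE2 P0 hP0mem h1
    · haveI := hP0p
      rw [hCP, Ideal.IsPrime.prod_mem_iff] at h1
      obtain ⟨j, hj, hdj⟩ := h1
      exact hd1 j P0 hP0 (Finset.mem_filter.mp hj).2 hdj
  -- c works modulo nilpotents
  have hc2 : ∀ e, E0 ≤ e → c * z ^ p ^ e ∈ bracketPow I (p ^ e) ⊔ nilradical S := by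
    intro e he
    have heq : c * z ^ p ^ e = ∑ P ∈ PS, E P * (CP P * z ^ p ^ e) := by
      rw [hc, Finset.sum_mul]
      exact Finset.sum_congr rfl fun P _ => by ring
    rw [heq]
    refine Ideal.sum_mem _ fun P hPmem => ?_
    have hPmin : P ∈ minimalPrimes S := hfin.mem_toFinset.mp hPmem
    obtain ⟨u, hu, v, hv, huv⟩ := Submodule.mem_sup.mp (hqP e he P hPmin)
    have heq2 : E P * (CP P * z ^ p ^ e) = E P * u + E P * v := by
      rw [← mul_add, huv]
    rw [heq2]
    refine Ideal.add_mem _ (Submodule.mem_sup_left (Ideal.mul_mem_left _ _ hu))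
      (Submodule.mem_sup_right ?_)
    have hall : ∀ Q ∈ minimalPrimes S, E P * v ∈ Q := by
      intro Q hQ
      by_cases hQP : Q = P
      · subst hQP; exact Ideal.mul_mem_left _ _ hv
      · exact Ideal.mul_mem_right _ _ (hE1 P hPmem Q (hfin.mem_toFinset.mpr hQ) hQP)
    rw [nilradical_eq_sInf, Ideal.mem_sInf]
    intro J hJ
    haveI : J.IsPrime := hJ
    obtain ⟨Q, hQ, hQle⟩ := Ideal.exists_minimalPrimes_le (bot_le : ⊥ ≤ J)
    exact hQle (hall Q hQ)
  -- Step 3 : kill the nilpotents by Frobenius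
  obtain ⟨m0, hm0⟩ := IsNoetherianRing.isNilpotent_nilradical S
  have hpow : m0 ≤ p ^ m0 := le_of_lt (Nat.lt_pow_self (n := m0) hp.one_lt)
  refine ⟨c ^ p ^ m0, ?_, E0 + m0, ?_⟩
  · intro P hP hmem
    exact hc1 P hP (hP.1.1.mem_of_pow_mem _ hmem)
  · intro e he
    have hE0e' : E0 ≤ e - m0 := by omega
    have hee : e = (e - m0) + m0 := by omega
    obtain ⟨u, hu, v, hv, huv⟩ := Submodule.mem_sup.mp (hc2 (e - m0) hE0e')
    have hv0 : v ^ p ^ m0 = 0 := by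
      have h1 : v ^ m0 ∈ nilradical S ^ m0 := Ideal.pow_mem_pow hv m0
      rw [hm0] at h1
      have h2 : v ^ m0 = 0 := by simpa using h1
      calc v ^ p ^ m0 = v ^ m0 * v ^ (p ^ m0 - m0) := by rw [← pow_add]; congr 1; omega
        _ = 0 := by rw [h2, zero_mul]
    have hkey : (c * z ^ p ^ (e - m0)) ^ p ^ m0 = c ^ p ^ m0 * z ^ p ^ e := by
      rw [mul_pow, ← pow_mul, ← pow_add, ← hee]
    have heq : c ^ p ^ m0 * z ^ p ^ e = u ^ p ^ m0 := by
      rw [← hkey, ← huv, fresh hp hpS, hv0, add_zero]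
    rw [heq]
    have hmem := mem_bracketPow_pow hp hpS hu m0
    rwa [← hee] at hmem

/-- tight closure of ideals is glueable. -/
theorem tightClosure_glueable (p : ℕ) (hp : p.Prime)
    {R : Type*} [CommRing R] [IsNoetherianRing R] [CharP R p]
    {A : Type*} (f : A → R) (g : R)
    (hg : g ∈ (Ideal.span (Set.range f)).radical)
    (I : Ideal R) (z : R)
    (hz : ∀ α : A, algebraMap R (Localization.Away (f α)) z
        ∈ tightClosure p (I.map (algebraMap R (Localization.Away (f α))))) :
    algebraMap R (Localization.Away g) z
      ∈ tightClosure p (I.map (algebraMap R (Localization.Away g))) := by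
  classical
  set S := Localization.Away g with hS
  set φ := algebraMap R S with hφ
  have hpR : (p : R) = 0 := CharP.cast_eq_zero R p
  have hpS : (p : S) = 0 := by rw [← map_natCast φ p, hpR, map_zero]
  haveI hNoeth : IsNoetherianRing S :=
    IsLocalization.isNoetherianRing (Submonoid.powers g) S inferInstance
  -- get a finite expression of a power of g
  obtain ⟨N, hN⟩ := hg
  obtain ⟨n, a, w, hsum⟩ := Submodule.mem_span_set'.mp hN
  have hw : ∀ i : Fin n, ∃ αi : A, f αi = (w i : R) := fun i => (w i).2
  choose α hα using hw
  set F : Fin n → S := fun i => φ (f (α i)) with hF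
  -- 1 is in the radical of the span of the F i
  have hgN : φ (g ^ N) ∈ Ideal.span (Set.range F) := by
    rw [← hsum, map_sum]
    refine Ideal.sum_mem _ fun i _ => ?_
    have : φ (a i • (w i : R)) = φ (a i) * F i := by
      rw [smul_eq_mul, map_mul, hF]
      simp [hα i]
    rw [this]
    exact Ideal.mul_mem_left _ _ (Ideal.subset_span ⟨i, rfl⟩)
  have hunit : IsUnit (φ (g ^ N)) := by
    rw [map_pow]
    exact (IsLocalization.map_units S (⟨g, ⟨1, pow_one g⟩⟩ : Submonoid.powers g)).pow N
  have h1span : (1 : S) ∈ Ideal.span (Set.range F) := by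
    obtain ⟨uu, huu⟩ := hunit
    have hmem : (↑uu⁻¹ : S) * φ (g ^ N) ∈ Ideal.span (Set.range F) :=
      Ideal.mul_mem_left _ _ hgN
    rwa [← huu, Units.inv_mul] at hmem
  have h1rad : (1 : S) ∈ (Ideal.span (Set.range F)).radical := Ideal.le_radical h1span
  -- per-index data
  have hdata : ∀ i : Fin n, ∃ dS : S, (∀ P ∈ minimalPrimes S, F i ∉ P → dS ∉ P) ∧
      ∃ e₀ : ℕ, ∀ e, e₀ ≤ e → ∃ t,
        F i ^ t * (dS * φ z ^ p ^ e) ∈ bracketPow (I.map φ) (p ^ e) := by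
    intro i
    obtain ⟨d, hd1, e₀, hd2⟩ := pull hp hpR (f (α i)) z I (hz (α i))
    refine ⟨φ d, ?_, e₀, ?_⟩
    · intro P' hP' hFiP' hdP'
      have hPc : P'.comap φ ∈ minimalPrimes R :=
        comap_minimalPrimes (Submonoid.powers g) hP'
      have hfP : f (α i) ∉ P'.comap φ := fun hmem => hFiP' (Ideal.mem_comap.mp hmem)
      exact hd1 _ hPc hfP (Ideal.mem_comap.mpr hdP')
    · intro e he
      obtain ⟨t, ht⟩ := hd2 e he
      refine ⟨t, ?_⟩
      have hmem := Ideal.mem_map_of_mem φ ht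
      have hle := map_bracketPow_le φ I (p ^ e)
      have h2 := hle hmem
      simpa [map_mul, map_pow] using h2
  exact core hp hpS F h1rad (I.map φ) (φ z) hdata
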